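/- arXiv:2503.07386 — 2 statements merged into one kernel-verified Lean document; each statement's English description precedes it below -/
import Mathlib

section
/- Let p ≥ 3 and s ≥ p be integers with s − p + 1 = c(p−1) + d, 0 ≤ d ≤ p−2, and let n be sufficiently large. The graph G_4 defined as K_1 ∨ (K_{p−2} ∨ I_{n−p+1−c(2p−2)} ∪ c·K_{2p−2}) when d = 0, and K_1 ∨ (K_{p−2} ∨ I_{n−p−c(2p−2)−2d} ∪ c·K_{2p−2} ∪ K_{2d+1}) when d ≠ 0, contains no cycle of length at least 2p and no matching of size s+1. -/
/-- The join of two graphs: all edges between the two sides are added. -/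
def graphJoin {α β : Type*} (G : SimpleGraph α) (H : SimpleGraph β) : SimpleGraph (α ⊕ β) where
  Adj x y := match x, y with
    | Sum.inl a, Sum.inl b => G.Adj a b
    | Sum.inr a, Sum.inr b => H.Adj a b
    | _, _ => True
  symm := ⟨by rintro (a | a) (b | b) h <;> first | exact h.symm | trivial⟩
  loopless := ⟨by rintro (a | a) h <;> exact (SimpleGraph.irrefl _) h⟩

/-- The disjoint union of `a` copies of the complete graph `K_m`. -/
def multiK (a m : ℕ) : SimpleGraph (Fin a × Fin m) where
  Adj x y := x.1 = y.1 ∧ x.2 ≠ y.2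
  symm := ⟨by rintro x y ⟨h1, h2⟩; exact ⟨h1.symm, h2.symm⟩⟩
  loopless := ⟨by rintro x ⟨h1, h2⟩; exact h2 rfl⟩

/-- `G` has no cycle of length at least `k`. -/
def NoLongCycle {α : Type*} (G : SimpleGraph α) (k : ℕ) : Prop :=
  ¬ ∃ (a : α) (c : G.Walk a a), c.IsCycle ∧ k ≤ c.length

/-- `G` has no matching consisting of `m` pairwise disjoint edges. -/
def NoMatchingOfSize {α : Type*} (G : SimpleGraph α) (m : ℕ) : Prop :=
  ∀ M : G.Subgraph, M.IsMatching → M.verts.ncard < 2 * m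

/-- `G₄ = K₁ ∨ (K_{p-2} ∨ I_{n-p+1-c(2p-2)} ∪ c K_{2p-2})` (the case `d = 0`). -/
def G4zero (p c n : ℕ) :
    SimpleGraph (Fin 1 ⊕ ((Fin (p - 2) ⊕ Fin (n - p + 1 - c * (2 * p - 2))) ⊕
      (Fin c × Fin (2 * p - 2)))) :=
  graphJoin (⊤ : SimpleGraph (Fin 1))
    ((graphJoin (⊤ : SimpleGraph (Fin (p - 2)))
        (⊥ : SimpleGraph (Fin (n - p + 1 - c * (2 * p - 2))))) ⊕g (multiK c (2 * p - 2)))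

/-- `G₄ = K₁ ∨ (K_{p-2} ∨ I_{n-p-c(2p-2)-2d} ∪ c K_{2p-2} ∪ K_{2d+1})` (the case `d ≠ 0`). -/
def G4pos (p c d n : ℕ) :
    SimpleGraph (Fin 1 ⊕ ((Fin (p - 2) ⊕ Fin (n - p - c * (2 * p - 2) - 2 * d)) ⊕
      ((Fin c × Fin (2 * p - 2)) ⊕ Fin (2 * d + 1)))) :=
  graphJoin (⊤ : SimpleGraph (Fin 1))
    ((graphJoin (⊤ : SimpleGraph (Fin (p - 2)))
        (⊥ : SimpleGraph (Fin (n - p - c * (2 * p - 2) - 2 * d)))) ⊕g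
      ((multiK c (2 * p - 2)) ⊕g (⊤ : SimpleGraph (Fin (2 * d + 1)))))

/-! ### Auxiliary list lemmas -/

section ListLemmas
open List
variable {α β γ δ : Type*}

/-- If no two consecutive elements both avoid `P`, length is at most `2·countP P + 1`. -/
lemma aux_len_le_two_countP (P : γ → Bool) :
    ∀ l : List γ, l.Chain' (fun a b => P a = true ∨ P b = true) →
      l.length ≤ 2 * l.countP P + 1
  | [], _ => by simp
  | [a], _ => by by_cases h : P a <;> simp [List.countP_cons, h]
  | a :: b :: t, h => by
    have h1 : P a = true ∨ P b = true := (List.isChain_cons_cons.mp h).1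
    have h2 : (b :: t).Chain' _ := (List.isChain_cons_cons.mp h).2
    rcases h1 with ha | hb
    · have := aux_len_le_two_countP P (b :: t) h2
      simp only [List.countP_cons, List.length_cons, ha, if_true] at *
      omega
    · have h3 := h2.tail
      have := aux_len_le_two_countP P t h3
      simp only [List.countP_cons, List.length_cons, hb, if_true] at *
      omega

lemma aux_eq_map_inr : ∀ l : List (α ⊕ β), (∀ x ∈ l, ∃ b, x = Sum.inr b) →
    ∃ l' : List β, l = l'.map Sum.inr
  | [], _ => ⟨[], rfl⟩
  | x :: t, h => by
    obtain ⟨b, rfl⟩ := h x (by simp)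
    obtain ⟨l', rfl⟩ := aux_eq_map_inr t (fun y hy => h y (by simp [hy]))
    exact ⟨b :: l', rfl⟩

lemma aux_eq_map_inl : ∀ l : List (α ⊕ β), (∀ x ∈ l, ∃ a, x = Sum.inl a) →
    ∃ l' : List α, l = l'.map Sum.inl
  | [], _ => ⟨[], rfl⟩
  | x :: t, h => by
    obtain ⟨a, rfl⟩ := h x (by simp)
    obtain ⟨l', rfl⟩ := aux_eq_map_inl t (fun y hy => h y (by simp [hy]))
    exact ⟨a :: l', rfl⟩

lemma aux_chain_rel_const {R : γ → γ → Prop} {f : γ → δ} (hR : ∀ a b, R a b → f a = f b) :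
    ∀ {a : γ} {l : List γ}, List.Chain R a l → ∀ x ∈ l, f x = f a := by
  intro a l h
  induction l generalizing a with
  | nil => simp
  | cons b l ih =>
    obtain ⟨hab, h⟩ := List.isChain_cons_cons.mp h
    intro x hx
    rcases List.mem_cons.mp hx with rfl | hx
    · exact (hR _ _ hab).symm
    · exact (ih h x hx).trans (hR _ _ hab).symm

lemma aux_chain'_rel_const {R : γ → γ → Prop} {f : γ → δ} (hR : ∀ a b, R a b → f a = f b)
    {l : List γ} (h : l.Chain' R) : ∀ x ∈ l, ∀ y ∈ l, f x = f y := by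
  cases l with
  | nil => simp
  | cons a t =>
    have key : ∀ x ∈ a :: t, f x = f a := by
      intro x hx
      rcases List.mem_cons.mp hx with rfl | hx
      · rfl
      · exact aux_chain_rel_const hR h x hx
    intro x hx y hy
    rw [key x hx, key y hy]

/-- In a chain whose relation preserves sides, all elements are on the same side. -/
lemma aux_chain'_sum_side {R : α ⊕ β → α ⊕ β → Prop}
    (hR : ∀ a b, R a b → (a.isLeft = b.isLeft)) {l : List (α ⊕ β)} (h : l.Chain' R) :
    (∀ x ∈ l, ∃ a, x = Sum.inl a) ∨ (∀ x ∈ l, ∃ b, x = Sum.inr b) := by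
  cases l with
  | nil => exact Or.inl (by simp)
  | cons a t =>
    have key := aux_chain'_rel_const hR h
    cases ha : a.isLeft with
    | true =>
      refine Or.inl fun x hx => ?_
      have := key x hx a (by simp)
      rw [ha] at this
      cases x with
      | inl x => exact ⟨x, rfl⟩
      | inr x => simp at this
    | false =>
      refine Or.inr fun x hx => ?_
      have := key x hx a (by simp)
      rw [ha] at this
      cases x with
      | inl x => simp at this
      | inr x => exact ⟨x, rfl⟩

end ListLemmas

/-! ### Descending chains along sum decompositions -/

section Descent
open List SimpleGraph
variable {α β : Type*}

lemma descend_right {G : SimpleGraph (α ⊕ β)} {H : SimpleGraph β}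
    (hGH : ∀ a b, G.Adj (Sum.inr a) (Sum.inr b) → H.Adj a b)
    {l : List (α ⊕ β)} (hc : l.Chain' G.Adj) (hnd : l.Nodup)
    (hall : ∀ x ∈ l, ∃ b, x = Sum.inr b) :
    ∃ l' : List β, l'.Chain' H.Adj ∧ l'.Nodup ∧ l'.length = l.length := by
  obtain ⟨l', heq⟩ := aux_eq_map_inr l hall
  subst heq
  refine ⟨l', ?_, hnd.of_map _, by simp⟩
  exact ((List.isChain_map _).1 hc).imp (fun a b h => hGH a b h)

lemma descend_left {G : SimpleGraph (α ⊕ β)} {H : SimpleGraph α}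
    (hGH : ∀ a b, G.Adj (Sum.inl a) (Sum.inl b) → H.Adj a b)
    {l : List (α ⊕ β)} (hc : l.Chain' G.Adj) (hnd : l.Nodup)
    (hall : ∀ x ∈ l, ∃ a, x = Sum.inl a) :
    ∃ l' : List α, l'.Chain' H.Adj ∧ l'.Nodup ∧ l'.length = l.length := by
  obtain ⟨l', heq⟩ := aux_eq_map_inl l hall
  subst heq
  refine ⟨l', ?_, hnd.of_map _, by simp⟩
  exact ((List.isChain_map _).1 hc).imp (fun a b h => hGH a b h)

lemma sum_side {G : SimpleGraph α} {H : SimpleGraph β} {l : List (α ⊕ β)}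
    (hc : l.Chain' (G ⊕g H).Adj) :
    (∀ x ∈ l, ∃ a, x = Sum.inl a) ∨ (∀ x ∈ l, ∃ b, x = Sum.inr b) := by
  refine aux_chain'_sum_side ?_ hc
  rintro (a | a) (b | b) h <;> simp_all

end Descent

/-! ### Bounds on nodup chains in the inner graphs -/

/-- Path bound in `K_k ∨ I_i`. -/
lemma join_bound {k i : ℕ} {l : List (Fin k ⊕ Fin i)}
    (hc : l.Chain' (graphJoin (⊤ : SimpleGraph (Fin k)) (⊥ : SimpleGraph (Fin i))).Adj)
    (hnd : l.Nodup) : l.length ≤ 2 * k + 1 := by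
  have h1 : l.length ≤ 2 * l.countP (·.isLeft) + 1 := by
    refine aux_len_le_two_countP _ l (hc.imp ?_)
    rintro (a | a) (b | b) h <;> simp_all [graphJoin]
  have h2 : l.countP (·.isLeft) ≤ k := by
    rw [List.countP_eq_length_filter]
    have hnd' : (l.filter (·.isLeft)).Nodup := hnd.filter _
    obtain ⟨l', heq⟩ := aux_eq_map_inl (l.filter (·.isLeft)) (by
      intro x hx
      have := List.of_mem_filter hx
      cases x with
      | inl a => exact ⟨a, rfl⟩
      | inr a => simp at this)
    rw [heq] at hnd' ⊢
    have : l'.Nodup := hnd'.of_map _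
    simpa using this.length_le_card
  omega

/-- Path bound in one clique of `multiK`. -/
lemma multiK_bound {c m : ℕ} {l : List (Fin c × Fin m)}
    (hc : l.Chain' (multiK c m).Adj) (hnd : l.Nodup) : l.length ≤ m := by
  have hconst : ∀ x ∈ l, ∀ y ∈ l, x.1 = y.1 :=
    aux_chain'_rel_const (f := Prod.fst) (fun a b h => h.1) hc
  have : (l.map Prod.snd).Nodup := by
    refine hnd.map_on ?_
    intro x hx y hy hxy
    exact Prod.ext (hconst x hx y hy) hxy
  simpa using this.length_le_card

/-- Nodup-chain bound in `(K_k ∨ I_i) ⊕g (c·K_m)`. -/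
lemma inner_zero_bound {k i c m : ℕ} {l : List ((Fin k ⊕ Fin i) ⊕ (Fin c × Fin m))}
    (hc : l.Chain' ((graphJoin (⊤ : SimpleGraph (Fin k)) (⊥ : SimpleGraph (Fin i)))
      ⊕g multiK c m).Adj)
    (hnd : l.Nodup) : l.length ≤ max (2 * k + 1) m := by
  rcases sum_side hc with hall | hall
  · obtain ⟨l', hc', hnd', hlen⟩ :=
      descend_left (H := graphJoin ⊤ ⊥) (fun a b h => h) hc hnd hall
    rw [← hlen]
    exact le_max_of_le_left (join_bound hc' hnd')
  · obtain ⟨l', hc', hnd', hlen⟩ := descend_right (H := multiK c m) (fun a b h => h) hc hnd hall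
    rw [← hlen]
    exact le_max_of_le_right (multiK_bound hc' hnd')

/-- Nodup-chain bound in `(K_k ∨ I_i) ⊕g (c·K_m ⊕g K_t)`. -/
lemma inner_pos_bound {k i c m t : ℕ}
    {l : List ((Fin k ⊕ Fin i) ⊕ ((Fin c × Fin m) ⊕ Fin t))}
    (hc : l.Chain' ((graphJoin (⊤ : SimpleGraph (Fin k)) (⊥ : SimpleGraph (Fin i)))
      ⊕g (multiK c m ⊕g (⊤ : SimpleGraph (Fin t)))).Adj)
    (hnd : l.Nodup) : l.length ≤ max (2 * k + 1) (max m t) := by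
  rcases sum_side hc with hall | hall
  · obtain ⟨l', hc', hnd', hlen⟩ :=
      descend_left (H := graphJoin ⊤ ⊥) (fun a b h => h) hc hnd hall
    rw [← hlen]
    exact le_max_of_le_left (join_bound hc' hnd')
  · obtain ⟨l', hc', hnd', hlen⟩ :=
      descend_right (H := multiK c m ⊕g ⊤) (fun a b h => h) hc hnd hall
    rw [← hlen]
    refine le_max_of_le_right ?_
    rcases sum_side hc' with hall' | hall'
    · obtain ⟨l'', hc'', hnd'', hlen'⟩ :=
        descend_left (H := multiK c m) (fun a b h => h) hc' hnd' hall'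
      rw [← hlen']
      exact le_max_of_le_left (multiK_bound hc'' hnd'')
    · obtain ⟨l'', hc'', hnd'', hlen'⟩ :=
        descend_right (H := (⊤ : SimpleGraph (Fin t))) (fun a b h => h) hc' hnd' hall'
      rw [← hlen']
      exact le_max_of_le_right (by simpa using hnd''.length_le_card)

/-! ### Extracting a nodup chain from a cycle -/

open SimpleGraph in
/-- From a cycle, extract a nodup chain avoiding any given vertex. -/
lemma cycle_extract {V : Type*} {G : SimpleGraph V} {a : V} (c : G.Walk a a)
    (hc : c.IsCycle) (apex : V) :
    ∃ l : List V, l.Chain' G.Adj ∧ l.Nodup ∧ apex ∉ l ∧ c.length ≤ l.length + 1 := by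
  classical
  by_cases h : apex ∈ c.support
  · have hc' : (c.rotate apex h).IsCycle := hc.rotate h
    have hlen : (c.rotate apex h).length = c.length := by
      have := (c.rotate_darts apex h).perm.length_eq
      simpa [Walk.length_darts] using this
    obtain ⟨w, hadj, q, hq⟩ : ∃ (w : V) (hadj : G.Adj apex w) (q : G.Walk w apex),
        c.rotate apex h = Walk.cons hadj q := by
      cases hcc : c.rotate apex h with
      | nil =>
        exfalso
        have h3 := hc'.three_le_length
        rw [hcc] at h3
        simp at h3
      | cons hadj q => exact ⟨_, hadj, q, rfl⟩
    rw [hq] at hc' hlen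
    have hpath : q.IsPath := ((Walk.cons_isCycle_iff q hadj).mp hc').1
    have hnd : q.support.Nodup := hpath.support_nodup
    have hsup : q.support = q.support.dropLast ++ [apex] := by
      conv_lhs => rw [← q.support.dropLast_append_getLast (by simp)]
      rw [q.getLast_support]
    refine ⟨q.support.dropLast, ?_, ?_, ?_, ?_⟩
    · exact q.isChain_adj_support.prefix q.support.dropLast_prefix
    · exact q.support.dropLast_sublist.nodup hnd
    · intro hmem
      rw [hsup] at hnd
      exact (List.disjoint_of_nodup_append hnd) hmem (by simp)
    · have h1 : q.support.length = q.length + 1 := q.length_support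
      have h2 : q.support.dropLast.length = q.support.length - 1 := by simp
      have h3 : c.length = q.length + 1 := by
        rw [← hlen]; simp
      omega
  · refine ⟨c.support.tail, ?_, hc.2, ?_, ?_⟩
    · exact c.isChain_adj_support.tail
    · intro hmem
      exact h (List.mem_of_mem_tail hmem)
    · have h1 : c.support.length = c.length + 1 := c.length_support
      have h2 : c.support.tail.length = c.support.length - 1 := by simp
      omega

/-! ### Matching helpers -/

lemma matching_partner {V : Type*} {G : SimpleGraph V} {M : G.Subgraph}
    (hM : M.IsMatching) :
    ∃ f : V → V, (∀ v ∈ M.verts, M.Adj v (f v)) ∧ Set.InjOn f M.verts := by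
  classical
  refine ⟨fun v => if h : v ∈ M.verts then ((hM h).exists).choose else v, fun v hv => ?_, ?_⟩
  · simp only [dif_pos hv]
    exact ((hM hv).exists).choose_spec
  · intro v₁ hv₁ v₂ hv₂ heq
    simp only [dif_pos hv₁, dif_pos hv₂] at heq
    have h1 : M.Adj v₁ ((hM hv₁).exists).choose := ((hM hv₁).exists).choose_spec
    have h2 : M.Adj v₂ ((hM hv₂).exists).choose := ((hM hv₂).exists).choose_spec
    rw [heq] at h1
    have hw : ((hM hv₂).exists).choose ∈ M.verts := h1.symm.fst_mem
    obtain ⟨u, -, hu⟩ := hM hw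
    exact (hu _ h1.symm).trans (hu _ h2.symm).symm

lemma ncard_le_of_injOn_univ {V W : Type*} [Fintype W] {s : Set V} (f : V → W)
    (hf : Set.InjOn f s) : s.ncard ≤ Fintype.card W := by
  have := Set.ncard_le_ncard_of_injOn f (fun a _ => Set.mem_univ a) hf Set.finite_univ
  simpa [Set.ncard_univ] using this

section Matching

variable {α β ι γ : Type*}

/-- Collapse map forgetting the independent part. -/
def collapseI (junk : α) : α ⊕ ((β ⊕ ι) ⊕ γ) → α ⊕ (β ⊕ γ)
  | .inl x => .inl x
  | .inr (.inl (.inl k)) => .inr (.inl k)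
  | .inr (.inl (.inr _)) => .inl junk
  | .inr (.inr q) => .inr (.inr q)

lemma collapseI_injOn (junk : α) :
    Set.InjOn (collapseI (β := β) (ι := ι) (γ := γ) junk)
      {v | ¬ ∃ x, v = Sum.inr (Sum.inl (Sum.inr x))} := by
  rintro (x | ((k | x) | q)) h₁ (y | ((k' | y) | q')) h₂ heq
  · simp [collapseI] at heq; rw [heq]
  · simp [collapseI] at heq
  · exact absurd ⟨y, rfl⟩ h₂
  · simp [collapseI] at heq
  · simp [collapseI] at heq
  · simp [collapseI] at heq; rw [heq]
  · exact absurd ⟨y, rfl⟩ h₂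
  · simp [collapseI] at heq
  · exact absurd ⟨x, rfl⟩ h₁
  · exact absurd ⟨x, rfl⟩ h₁
  · exact absurd ⟨x, rfl⟩ h₁
  · exact absurd ⟨x, rfl⟩ h₁
  · simp [collapseI] at heq
  · simp [collapseI] at heq
  · exact absurd ⟨y, rfl⟩ h₂
  · simp [collapseI] at heq; rw [heq]

/-- Project onto the "apex plus small clique" part. -/
def projA (junk : α) : α ⊕ ((β ⊕ ι) ⊕ γ) → α ⊕ β
  | .inl y => .inl y
  | .inr (.inl (.inl k)) => .inr k
  | _ => .inl junk

/-- Generic vertex count bound for matchings in graphs where the `ι` part has all its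
neighbours in the `α ⊕ β` part. -/
lemma matching_verts_count [Fintype α] [Fintype β] [Fintype γ] [Finite ι] (junk : α)
    {G : SimpleGraph (α ⊕ ((β ⊕ ι) ⊕ γ))} (M : G.Subgraph) (hM : M.IsMatching)
    (hshape : ∀ (x : ι) w, G.Adj (Sum.inr (Sum.inl (Sum.inr x))) w →
      (∃ y, w = Sum.inl y) ∨ (∃ k, w = Sum.inr (Sum.inl (Sum.inl k)))) :
    M.verts.ncard ≤
      (Fintype.card α + Fintype.card β + Fintype.card γ) +
        (Fintype.card α + Fintype.card β) := by
  classical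
  obtain ⟨f, hf, hinj⟩ := matching_partner hM
  have hsplit :
      (M.verts ∩ {v | ∃ x, v = Sum.inr (Sum.inl (Sum.inr x))}).ncard +
        (M.verts \ {v | ∃ x, v = Sum.inr (Sum.inl (Sum.inr x))}).ncard = M.verts.ncard :=
    Set.ncard_inter_add_ncard_diff_eq_ncard _ _ (Set.toFinite _)
  have h1 : (M.verts \ {v | ∃ x, v = Sum.inr (Sum.inl (Sum.inr x))}).ncard ≤
      Fintype.card α + Fintype.card β + Fintype.card γ := by
    have hsub : (M.verts \ {v | ∃ x, v = Sum.inr (Sum.inl (Sum.inr x))}) ⊆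
        {v | ¬ ∃ x, v = Sum.inr (Sum.inl (Sum.inr x))} := fun v hv => hv.2
    have := ncard_le_of_injOn_univ (collapseI (β := β) (ι := ι) (γ := γ) junk)
      ((collapseI_injOn junk).mono hsub)
    simp only [Fintype.card_sum] at this
    omega
  have h2 : (M.verts ∩ {v | ∃ x, v = Sum.inr (Sum.inl (Sum.inr x))}).ncard ≤
      Fintype.card α + Fintype.card β := by
    have hsh : ∀ v ∈ M.verts ∩ {v | ∃ x, v = Sum.inr (Sum.inl (Sum.inr x))},
        (∃ y, f v = Sum.inl y) ∨ (∃ k, f v = Sum.inr (Sum.inl (Sum.inl k))) := by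
      rintro v ⟨hv, x, rfl⟩
      exact hshape x _ (M.adj_sub (hf _ hv))
    have := ncard_le_of_injOn_univ
      (s := M.verts ∩ {v | ∃ x, v = Sum.inr (Sum.inl (Sum.inr x))})
      (fun v => projA (β := β) (ι := ι) (γ := γ) junk (f v)) ?_
    · simp only [Fintype.card_sum] at this
      omega
    · intro v₁ h₁ v₂ h₂ heq
      simp only at heq
      refine hinj h₁.1 h₂.1 ?_
      rcases hsh v₁ h₁ with ⟨y, hy⟩ | ⟨k, hk⟩
      · rcases hsh v₂ h₂ with ⟨y', hy'⟩ | ⟨k', hk'⟩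
        · rw [hy, hy'] at heq ⊢
          simp [projA] at heq
          rw [heq]
        · rw [hy, hk'] at heq ⊢
          simp [projA] at heq
      · rcases hsh v₂ h₂ with ⟨y', hy'⟩ | ⟨k', hk'⟩
        · rw [hk, hy'] at heq ⊢
          simp [projA] at heq
        · rw [hk, hk'] at heq ⊢
          simp [projA] at heq
          rw [heq]
  omega

end Matching

/-! ### The four main properties -/

lemma noLongCycle_zero (p c n : ℕ) (hp : 3 ≤ p) : NoLongCycle (G4zero p c n) (2 * p) := by
  rintro ⟨a, w, hcyc, hlen⟩
  obtain ⟨l, hchain, hnd, hapex, hle⟩ := cycle_extract w hcyc (Sum.inl 0)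
  have hall : ∀ x ∈ l, ∃ b, x = Sum.inr b := by
    intro x hx
    cases x with
    | inl i =>
      exfalso
      have : i = 0 := Subsingleton.elim i 0
      subst this
      exact hapex hx
    | inr b => exact ⟨b, rfl⟩
  obtain ⟨l', hc', hnd', hlen'⟩ := descend_right
    (H := (graphJoin (⊤ : SimpleGraph (Fin (p - 2)))
        (⊥ : SimpleGraph (Fin (n - p + 1 - c * (2 * p - 2))))) ⊕g (multiK c (2 * p - 2)))
    (fun a b h => h) hchain hnd hall
  have hb := inner_zero_bound hc' hnd'
  have hb2 : max (2 * (p - 2) + 1) (2 * p - 2) ≤ 2 * p - 2 := by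
    apply max_le <;> omega
  omega

lemma noLongCycle_pos (p c d n : ℕ) (hp : 3 ≤ p) (hd : d ≤ p - 2) :
    NoLongCycle (G4pos p c d n) (2 * p) := by
  rintro ⟨a, w, hcyc, hlen⟩
  obtain ⟨l, hchain, hnd, hapex, hle⟩ := cycle_extract w hcyc (Sum.inl 0)
  have hall : ∀ x ∈ l, ∃ b, x = Sum.inr b := by
    intro x hx
    cases x with
    | inl i =>
      exfalso
      have : i = 0 := Subsingleton.elim i 0
      subst this
      exact hapex hx
    | inr b => exact ⟨b, rfl⟩
  obtain ⟨l', hc', hnd', hlen'⟩ := descend_right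
    (H := (graphJoin (⊤ : SimpleGraph (Fin (p - 2)))
        (⊥ : SimpleGraph (Fin (n - p - c * (2 * p - 2) - 2 * d)))) ⊕g
      ((multiK c (2 * p - 2)) ⊕g (⊤ : SimpleGraph (Fin (2 * d + 1)))))
    (fun a b h => h) hchain hnd hall
  have hb := inner_pos_bound hc' hnd'
  have hb2 : max (2 * (p - 2) + 1) (max (2 * p - 2) (2 * d + 1)) ≤ 2 * p - 2 := by
    apply max_le
    · omega
    · apply max_le <;> omega
  omega


lemma shape_zero (p c n : ℕ) (x : Fin (n - p + 1 - c * (2 * p - 2)))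
    (w : Fin 1 ⊕ ((Fin (p - 2) ⊕ Fin (n - p + 1 - c * (2 * p - 2))) ⊕ (Fin c × Fin (2 * p - 2))))
    (hadj : (G4zero p c n).Adj (Sum.inr (Sum.inl (Sum.inr x))) w) :
    (∃ y, w = Sum.inl y) ∨ (∃ k, w = Sum.inr (Sum.inl (Sum.inl k))) := by
  rcases w with (y | ((k | x') | q))
  · exact Or.inl ⟨y, rfl⟩
  · exact Or.inr ⟨k, rfl⟩
  · simp [G4zero, graphJoin] at hadj
  · simp [G4zero, graphJoin] at hadj

lemma shape_pos (p c d n : ℕ) (x : Fin (n - p - c * (2 * p - 2) - 2 * d))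
    (w : Fin 1 ⊕ ((Fin (p - 2) ⊕ Fin (n - p - c * (2 * p - 2) - 2 * d)) ⊕
      ((Fin c × Fin (2 * p - 2)) ⊕ Fin (2 * d + 1))))
    (hadj : (G4pos p c d n).Adj (Sum.inr (Sum.inl (Sum.inr x))) w) :
    (∃ y, w = Sum.inl y) ∨ (∃ k, w = Sum.inr (Sum.inl (Sum.inl k))) := by
  rcases w with (y | ((k | x') | (q | t)))
  · exact Or.inl ⟨y, rfl⟩
  · exact Or.inr ⟨k, rfl⟩
  · simp [G4pos, graphJoin] at hadj
  · simp [G4pos, graphJoin] at hadj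
  · simp [G4pos, graphJoin] at hadj

lemma noMatching_zero (p s c n : ℕ) (hp : 3 ≤ p) (hs : p ≤ s)
    (hcd : s - p + 1 = c * (p - 1)) : NoMatchingOfSize (G4zero p c n) (s + 1) := by
  intro M hM
  have hcount := matching_verts_count (junk := (0 : Fin 1)) M hM (shape_zero p c n)
  simp only [Fintype.card_fin, Fintype.card_prod] at hcount
  have harr : c * (2 * p - 2) = 2 * (c * (p - 1)) := by
    rw [show 2 * p - 2 = 2 * (p - 1) by omega]; ring
  omega

lemma noMatching_pos (p s c d n : ℕ) (hp : 3 ≤ p) (hs : p ≤ s)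
    (hcd : s - p + 1 = c * (p - 1) + d) : NoMatchingOfSize (G4pos p c d n) (s + 1) := by
  intro M hM
  have hcount := matching_verts_count (junk := (0 : Fin 1)) M hM (shape_pos p c d n)
  simp only [Fintype.card_fin, Fintype.card_prod, Fintype.card_sum] at hcount
  have harr : c * (2 * p - 2) = 2 * (c * (p - 1)) := by
    rw [show 2 * p - 2 = 2 * (p - 1) by omega]; ring
  omega

theorem stmt_9 (p s c d : ℕ) (hp : 3 ≤ p) (hs : p ≤ s)
    (hcd : s - p + 1 = c * (p - 1) + d) (hd : d ≤ p - 2) :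
    ∃ N : ℕ, ∀ n : ℕ, N ≤ n →
      (d = 0 →
        NoLongCycle (G4zero p c n) (2 * p) ∧ NoMatchingOfSize (G4zero p c n) (s + 1)) ∧
      (d ≠ 0 →
        NoLongCycle (G4pos p c d n) (2 * p) ∧ NoMatchingOfSize (G4pos p c d n) (s + 1)) := by
  refine ⟨0, fun n _ => ⟨fun hd0 => ⟨noLongCycle_zero p c n hp, ?_⟩,
    fun _ => ⟨noLongCycle_pos p c d n hp hd, noMatching_pos p s c d n hp hs hcd⟩⟩⟩
  exact noMatching_zero p s c n hp hs (by omega)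
end

section
/- Let p ≥ 3, s ≥ p, c = ⌊(s−p+1)/(p−1)⌋ and suppose d := s−p+1−c(p−1) satisfies 1 ≤ d ≤ p−2. For sufficiently large n, the graph G_6 = K_1 ∨ ((K_{p−2} ∨ (K_2 ∪ I_{n−p−1−c(2p−2)})) ∪ c·K_{2p−2}) contains no cycle of length at least 2p and no matching of size s+1. -/
/-- `G₆ = K₁ ∨ ((K_{p-2} ∨ (K₂ ∪ I_{n-p-1-c(2p-2)})) ∪ c K_{2p-2})`. -/
def G6 (p c n : ℕ) :
    SimpleGraph (Fin 1 ⊕ ((Fin (p - 2) ⊕ (Fin 2 ⊕ Fin (n - p - 1 - c * (2 * p - 2)))) ⊕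
      (Fin c × Fin (2 * p - 2)))) :=
  graphJoin (⊤ : SimpleGraph (Fin 1))
    ((graphJoin (⊤ : SimpleGraph (Fin (p - 2)))
        ((⊤ : SimpleGraph (Fin 2)) ⊕g (⊥ : SimpleGraph (Fin (n - p - 1 - c * (2 * p - 2)))))) ⊕g
      (multiK c (2 * p - 2)))

open SimpleGraph List in
section
open SimpleGraph List
variable {V : Type*} {G : SimpleGraph V}

private lemma countP_or_le (l : List α) (p q : α → Bool) :
    l.countP (fun a => p a || q a) ≤ l.countP p + l.countP q := by
  induction l with
  | nil => simp
  | cons x t ih =>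
    simp only [List.countP_cons]
    cases hx : p x <;> cases hq : q x <;> simp [hx, hq] <;> omega

private lemma count_dropLast_eq {u : V} (c : G.Walk u u) (v : V) [DecidableEq V] :
    c.support.dropLast.count v = c.support.tail.count v := by
  have h1 : c.support = u :: c.support.tail := c.support_eq_cons
  have hne : c.support ≠ [] := c.support_ne_nil
  have h2 : c.support.dropLast ++ [u] = c.support := by
    have := c.support.dropLast_append_getLast hne
    rwa [c.getLast_support] at this
  have := congrArg (List.count v) h2
  rw [List.count_append] at this
  have := congrArg (List.count v) h1
  rw [List.count_cons] at this
  simp [List.count_singleton'] at *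
  omega

/-- In a cycle, at most two edges contain any given vertex. -/
private lemma edges_countP_le_two {u : V} (c : G.Walk u u) (hc : c.IsCycle) (v : V)
    [DecidableEq V] : c.edges.countP (fun e => v ∈ e) ≤ 2 := by
  have hmap : c.edges = c.darts.map SimpleGraph.Dart.edge := rfl
  rw [hmap, List.countP_map]
  have hcong : c.darts.countP ((fun e => decide (v ∈ e)) ∘ SimpleGraph.Dart.edge)
      = c.darts.countP (fun d => (v == d.fst) || (v == d.snd)) := by
    apply List.countP_congr
    intro d _
    simp [SimpleGraph.Dart.edge, Sym2.mem_iff, Function.comp]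
  rw [hcong]
  calc c.darts.countP (fun d => (v == d.fst) || (v == d.snd))
      ≤ c.darts.countP (fun d => v == d.fst) + c.darts.countP (fun d => v == d.snd) :=
        countP_or_le _ _ _
    _ ≤ 2 := by
        have h1 : c.darts.countP (fun d => v == d.fst)
            = (c.darts.map (·.fst)).count v := by
          rw [List.count_eq_countP, List.countP_map]
          apply List.countP_congr; intro d _
          simp only [Function.comp, beq_iff_eq, decide_eq_decide]; exact eq_comm
        have h2 : c.darts.countP (fun d => v == d.snd)
            = (c.darts.map (·.snd)).count v := by
          rw [List.count_eq_countP, List.countP_map]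
          apply List.countP_congr; intro d _
          simp only [Function.comp, beq_iff_eq, decide_eq_decide]; exact eq_comm
        rw [h1, h2, c.map_fst_darts, c.map_snd_darts, count_dropLast_eq c v]
        have : c.support.tail.count v ≤ 1 := List.nodup_iff_count_le_one.mp hc.2 v
        omega
variable {V : Type*} {G : SimpleGraph V}

private lemma exists_crossing (A : Set V) :
    ∀ {a b : V} (w : G.Walk a b), a ∈ A → b ∉ A →
      ∃ x y, x ∈ A ∧ y ∉ A ∧ s(x, y) ∈ w.edges := by
  intro a b w
  induction w with
  | nil => intro ha hb; exact absurd ha hb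
  | @cons a m b h w ih =>
    intro ha hb
    by_cases hm : m ∈ A
    · obtain ⟨x, y, hx, hy, he⟩ := ih hm hb
      exact ⟨x, y, hx, hy, by simp [he]⟩
    · exact ⟨a, m, ha, hm, by simp⟩

private lemma closed_mem_support_tail {u : V} (c : G.Walk u u) (hnil : ¬ c.Nil)
    {v : V} (hv : v ∈ c.support) : v ∈ c.support.tail := by
  have h1 : c.support = u :: c.support.tail := c.support_eq_cons
  rw [h1] at hv
  rcases List.mem_cons.mp hv with h | h
  · subst h
    have hne : c.support.tail ≠ [] := by
      cases c with
      | nil => exact absurd SimpleGraph.Walk.nil_nil hnil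
      | cons h w => simp
    have h0 : c.support.getLast? = some v := by
      rw [List.getLast?_eq_getLast c.support_ne_nil, c.getLast_support]
    obtain ⟨w, t, ht⟩ := List.exists_cons_of_ne_nil hne
    rw [h1, ht, List.getLast?_cons_cons] at h0
    obtain ⟨hne2, hv2⟩ := List.mem_getLast?_eq_getLast
      (show v ∈ (w :: t).getLast? from by rw [h0]; rfl)
    rw [ht]
    have := List.getLast_mem hne2
    rwa [← hv2] at this
  · exact h

/-- A cycle meeting both `A` and its complement has two distinct crossing edges. -/
private lemma two_crossings {u : V} (c : G.Walk u u) (hc : c.IsCycle) (A : Set V)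
    {x y : V} (hx : x ∈ c.support) (hxA : x ∈ A) (hy : y ∈ c.support) (hyA : y ∉ A) :
    ∃ a₁ b₁ a₂ b₂, a₁ ∈ A ∧ b₁ ∉ A ∧ a₂ ∈ A ∧ b₂ ∉ A ∧
      s(a₁, b₁) ∈ c.edges ∧ s(a₂, b₂) ∈ c.edges ∧ s(a₁, b₁) ≠ s(a₂, b₂) := by
  classical
  set c' := c.rotate x hx with hc'def
  have hc' : c'.IsCycle := hc.rotate hx
  have hedges : c'.edges ~r c.edges := c.rotate_edges x hx
  have hyt : y ∈ c.support.tail := closed_mem_support_tail c hc.not_nil hy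
  have hy' : y ∈ c'.support := by
    have := c.support_rotate x hx
    have : y ∈ c'.support.tail := (this.mem_iff).mpr hyt
    exact List.mem_of_mem_tail this
  obtain ⟨x1, y1, hx1, hy1, he1⟩ := exists_crossing A (c'.takeUntil y hy') hxA hyA
  obtain ⟨y2, x2, hy2, hx2, he2⟩ := exists_crossing Aᶜ (c'.dropUntil y hy') hyA
    (by simpa using hxA)
  have hsplit : c'.edges = (c'.takeUntil y hy').edges ++ (c'.dropUntil y hy').edges := by
    conv_lhs => rw [← c'.take_spec hy']
    rw [SimpleGraph.Walk.edges_append]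
  have hnd : c'.edges.Nodup := hc'.edges_nodup
  rw [hsplit] at hnd
  have hdisj := (List.nodup_append.mp hnd).2.2
  have hne : s(x1, y1) ≠ s(x2, y2) := by
    intro h
    exact hdisj _ he1 (s(x1, y1)) (by rw [h, Sym2.eq_swap]; exact he2) rfl
  refine ⟨x1, y1, x2, y2, hx1, hy1, by simpa using hx2, hy2, ?_, ?_, hne⟩
  · exact hedges.mem_iff.mp (hsplit ▸ List.mem_append_left _ he1)
  · exact hedges.mem_iff.mp (hsplit ▸ List.mem_append_right _
      (by rw [Sym2.eq_swap]; exact he2))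

private lemma length_le_of_support_subset {u : V} (c : G.Walk u u) (hc : c.IsCycle)
    [DecidableEq V] (B : Finset V) (h : ∀ v ∈ c.support, v ∈ B) :
    c.length ≤ B.card := by
  have h1 : c.support.tail.length = c.length := by
    have h2 := c.length_support
    have h3 : c.support.length = c.support.tail.length + 1 := by
      conv_lhs => rw [c.support_eq_cons]
      simp
    omega
  rw [← h1]
  have hnd : c.support.tail.Nodup := hc.2
  rw [← List.toFinset_card_of_nodup hnd]
  apply Finset.card_le_card
  intro v hv
  simp only [List.mem_toFinset] at hv
  exact h v (List.mem_of_mem_tail hv)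
end

section
open SimpleGraph List
variable {p c n : ℕ}
local notation "V'" => (Fin 1 ⊕ ((Fin (p - 2) ⊕ (Fin 2 ⊕ Fin (n - p - 1 - c * (2 * p - 2)))) ⊕
      (Fin c × Fin (2 * p - 2))))

private lemma adjM {j : Fin c} {i : Fin (2*p-2)} {z : V'}
    (h : (G6 p c n).Adj (Sum.inr (Sum.inr (j, i))) z) :
    z = Sum.inl 0 ∨ ∃ i', z = Sum.inr (Sum.inr (j, i')) := by
  rcases z with a | (b | b) | ⟨j', i'⟩
  · left; exact congrArg Sum.inl (Subsingleton.elim a 0)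
  · simp [G6, graphJoin, multiK] at h
  · simp [G6, graphJoin, multiK] at h
  · simp only [G6, graphJoin, multiK, SimpleGraph.sum_adj] at h
    right; exact ⟨i', by rw [h.1]⟩

private lemma adjI {x : Fin (n - p - 1 - c * (2 * p - 2))} {z : V'}
    (h : (G6 p c n).Adj (Sum.inr (Sum.inl (Sum.inr (Sum.inr x)))) z) :
    z = Sum.inl 0 ∨ ∃ a : Fin (p-2), z = Sum.inr (Sum.inl (Sum.inl a)) := by
  rcases z with a | (b | (b | b)) | q
  · left; exact congrArg Sum.inl (Subsingleton.elim a 0)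
  · right; exact ⟨b, rfl⟩
  · simp [G6, graphJoin, multiK] at h
  · simp [G6, graphJoin, multiK] at h
  · simp [G6, graphJoin, multiK] at h

private lemma adjK2 {x y : Fin 2 ⊕ Fin (n - p - 1 - c * (2 * p - 2))}
    (h : (G6 p c n).Adj (Sum.inr (Sum.inl (Sum.inr x))) (Sum.inr (Sum.inl (Sum.inr y)))) :
    ∃ a b : Fin 2, a ≠ b ∧ x = Sum.inl a ∧ y = Sum.inl b := by
  rcases x with a | a <;> rcases y with b | b <;>
    simp [G6, graphJoin, multiK, SimpleGraph.sum_adj] at h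
  exact ⟨a, b, by simpa using h, rfl, rfl⟩

private lemma g6_no_long_cycle (hp : 3 ≤ p) : NoLongCycle (G6 p c n) (2 * p) := by
  classical
  rintro ⟨u, cw, hcyc, hlen⟩
  obtain hA | hA := Classical.em
    (∃ (j : Fin c) (i : Fin (2*p-2)), Sum.inr (Sum.inr (j, i)) ∈ cw.support)
  · -- Case A : the cycle meets a copy of K_{2p-2}
    obtain ⟨j, i, hm⟩ := hA
    set Bf : Finset V' := {Sum.inl 0} ∪
      Finset.univ.image (fun x : Fin (2*p-2) => Sum.inr (Sum.inr (j, x))) with hBf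
    obtain hall | hall := Classical.em (∀ v ∈ cw.support, v ∈ Bf)
    · have h1 := length_le_of_support_subset cw hcyc Bf hall
      have h2 : Bf.card ≤ 1 + (2*p-2) := by
        refine le_trans (Finset.card_union_le _ _) ?_
        have := Finset.card_image_le (s := (Finset.univ : Finset (Fin (2*p-2))))
          (f := fun x : Fin (2*p-2) => (Sum.inr (Sum.inr (j, x)) : V'))
        simp only [Finset.card_univ, Fintype.card_fin] at this
        simpa using this
      omega
    · push_neg at hall
      obtain ⟨v, hv, hvB⟩ := hall
      set Tj : Set V' := {w | ∃ x, w = Sum.inr (Sum.inr (j, x))} with hTj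
      have hmemB : ∀ w ∈ Tj, w ∈ Bf := by
        rintro w ⟨x, rfl⟩; simp [hBf]
      have hvT : v ∉ Tj := fun h => hvB (hmemB v h)
      have hk1B : (Sum.inl 0 : V') ∈ Bf := by simp [hBf]
      have hvk1 : v ≠ Sum.inl 0 := fun h => hvB (h ▸ hk1B)
      obtain ⟨a1, b1, a2, b2, ha1, hb1, ha2, hb2, he1, he2, hne12⟩ :=
        two_crossings cw hcyc Tj hm ⟨i, rfl⟩ hv hvT
      obtain ⟨x1, rfl⟩ := ha1
      obtain ⟨x2, rfl⟩ := ha2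
      have hb1e : b1 = Sum.inl 0 := by
        rcases adjM (cw.adj_of_mem_edges he1) with h | ⟨i', rfl⟩
        · exact h
        · exact absurd ⟨i', rfl⟩ hb1
      have hb2e : b2 = Sum.inl 0 := by
        rcases adjM (cw.adj_of_mem_edges he2) with h | ⟨i', rfl⟩
        · exact h
        · exact absurd ⟨i', rfl⟩ hb2
      subst hb1e; subst hb2e
      obtain ⟨a3, b3, _, _, ha3, hb3, _, _, he3, _, _⟩ :=
        two_crossings cw hcyc (Tj ∪ {Sum.inl 0}) hm (Or.inl ⟨i, rfl⟩) hv
          (by rintro (h | h); exact hvT h; exact hvk1 h)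
      have ha3e : a3 = Sum.inl 0 := by
        rcases ha3 with ⟨x3, rfl⟩ | h
        · rcases adjM (cw.adj_of_mem_edges he3) with h | ⟨i', rfl⟩
          · exact absurd (Or.inr h) hb3
          · exact absurd (Or.inl ⟨i', rfl⟩) hb3
        · exact h
      subst ha3e
      have hb3T : b3 ∉ Tj := fun h => hb3 (Or.inl h)
      set e1 : Sym2 V' := s(Sum.inr (Sum.inr (j, x1)), Sum.inl 0) with he1d
      set e2 : Sym2 V' := s(Sum.inr (Sum.inr (j, x2)), Sum.inl 0) with he2d
      set e3 : Sym2 V' := s(Sum.inl 0, b3) with he3d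
      have hne13 : e1 ≠ e3 := by
        intro h
        rw [he1d, he3d, Sym2.eq_iff] at h
        rcases h with ⟨h1, h2⟩ | ⟨h1, h2⟩
        · exact absurd h1 (by simp)
        · exact hb3T (h1 ▸ ⟨x1, rfl⟩)
      have hne23 : e2 ≠ e3 := by
        intro h
        rw [he2d, he3d, Sym2.eq_iff] at h
        rcases h with ⟨h1, h2⟩ | ⟨h1, h2⟩
        · exact absurd h1 (by simp)
        · exact hb3T (h1 ▸ ⟨x2, rfl⟩)
      have hsub : ({e1, e2, e3} : Finset (Sym2 V')) ⊆
          (cw.edges.filter (fun e => Sum.inl 0 ∈ e)).toFinset := by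
        intro e he
        simp only [Finset.mem_insert, Finset.mem_singleton] at he
        rcases he with rfl | rfl | rfl <;>
          simp only [List.mem_toFinset, List.mem_filter, decide_eq_true_eq] <;>
          exact ⟨by assumption, by simp [he1d, he2d, he3d]⟩
      have hcard3 : ({e1, e2, e3} : Finset (Sym2 V')).card = 3 := by
        rw [Finset.card_insert_of_notMem (by simp [hne12, hne13]),
          Finset.card_insert_of_notMem (by simp [hne23]), Finset.card_singleton]
      have hlen3 := (Finset.card_le_card hsub).trans (List.toFinset_card_le _)
      rw [hcard3] at hlen3
      have hc2 := edges_countP_le_two cw hcyc (Sum.inl 0 : V')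
      rw [List.countP_eq_length_filter] at hc2
      omega
  · -- Case B : the cycle avoids the copies of K_{2p-2}
    push_neg at hA
    set E : Finset (Sym2 V') := cw.edges.toFinset with hE
    have hEcard : E.card = cw.length := by
      rw [hE, List.toFinset_card_of_nodup hcyc.edges_nodup, cw.length_edges]
    set Sfin : Finset V' := {Sum.inl 0} ∪
      Finset.univ.image (fun a : Fin (p-2) => Sum.inr (Sum.inl (Sum.inl a))) with hSfin
    set eK2 : Sym2 V' := s(Sum.inr (Sum.inl (Sum.inr (Sum.inl 0))),
      Sum.inr (Sum.inl (Sum.inr (Sum.inl 1)))) with heK2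
    have hcover : ∀ e ∈ E, (∃ v ∈ Sfin, v ∈ e) ∨ e = eK2 := by
      intro e he
      induction e using Sym2.ind with
      | _ x y =>
        rw [hE, List.mem_toFinset] at he
        have hadj := cw.adj_of_mem_edges he
        have hxs := cw.fst_mem_support_of_mem_edges he
        have hys := cw.snd_mem_support_of_mem_edges he
        rcases x with a | (b | xr) | ⟨j, i⟩
        · exact Or.inl ⟨Sum.inl 0, by simp [hSfin], by
            simp [Subsingleton.elim a 0]⟩
        · exact Or.inl ⟨Sum.inr (Sum.inl (Sum.inl b)), by simp [hSfin], by simp⟩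
        · rcases y with a | (b | yr) | ⟨j, i⟩
          · exact Or.inl ⟨Sum.inl 0, by simp [hSfin], by
              simp [Subsingleton.elim a 0]⟩
          · exact Or.inl ⟨Sum.inr (Sum.inl (Sum.inl b)), by simp [hSfin], by simp⟩
          · right
            obtain ⟨a, b, hab, rfl, rfl⟩ := adjK2 hadj
            rw [heK2]
            have : (a = 0 ∧ b = 1) ∨ (a = 1 ∧ b = 0) := by omega
            rcases this with ⟨rfl, rfl⟩ | ⟨rfl, rfl⟩
            · rfl
            · rw [Sym2.eq_swap]
          · exact absurd hys (hA j i)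
        · exact absurd hxs (hA j i)
    have hsplit : E ⊆ E.filter (fun e => ∃ v ∈ Sfin, v ∈ e) ∪ E.filter (fun e => e = eK2) := by
      intro e he
      rcases hcover e he with h | h
      · exact Finset.mem_union_left _ (Finset.mem_filter.mpr ⟨he, h⟩)
      · exact Finset.mem_union_right _ (Finset.mem_filter.mpr ⟨he, h⟩)
    have hq : (E.filter (fun e => e = eK2)).card ≤ 1 := by
      refine Finset.card_le_one.mpr ?_
      intro e he e' he'
      rw [Finset.mem_filter] at he he'
      rw [he.2, he'.2]
    have hvbound : ∀ v : V', (E.filter (fun e => v ∈ e)).card ≤ 2 := by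
      intro v
      have heq : E.filter (fun e => v ∈ e) = (cw.edges.filter (fun e => v ∈ e)).toFinset := by
        ext e
        simp [hE, List.mem_toFinset, List.mem_filter]
      rw [heq]
      refine (List.toFinset_card_le _).trans ?_
      rw [← List.countP_eq_length_filter]
      exact edges_countP_le_two cw hcyc v
    have hpbound : (E.filter (fun e => ∃ v ∈ Sfin, v ∈ e)).card ≤ 2 * (p - 1) := by
      have hsub2 : E.filter (fun e => ∃ v ∈ Sfin, v ∈ e) ⊆
          Sfin.biUnion (fun v => E.filter (fun e => v ∈ e)) := by
        intro e he
        rw [Finset.mem_filter] at he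
        obtain ⟨v, hvS, hve⟩ := he.2
        exact Finset.mem_biUnion.mpr ⟨v, hvS, Finset.mem_filter.mpr ⟨he.1, hve⟩⟩
      refine (Finset.card_le_card hsub2).trans ?_
      refine (Finset.card_biUnion_le).trans ?_
      have hScard : Sfin.card ≤ p - 1 := by
        refine (Finset.card_union_le _ _).trans ?_
        have := Finset.card_image_le (s := (Finset.univ : Finset (Fin (p-2))))
          (f := fun a : Fin (p-2) => (Sum.inr (Sum.inl (Sum.inl a)) : V'))
        simp only [Finset.card_univ, Fintype.card_fin] at this
        have : Finset.card {(Sum.inl 0 : V')} +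
            (Finset.univ.image (fun a : Fin (p-2) =>
              (Sum.inr (Sum.inl (Sum.inl a)) : V'))).card ≤ 1 + (p - 2) := by
          simp [this]
        omega
      calc ∑ v ∈ Sfin, (E.filter (fun e => v ∈ e)).card
          ≤ ∑ _v ∈ Sfin, 2 := Finset.sum_le_sum (fun v _ => hvbound v)
        _ = 2 * Sfin.card := by rw [Finset.sum_const, smul_eq_mul, mul_comm]
        _ ≤ 2 * (p - 1) := by omega
    have := (Finset.card_le_card hsplit).trans (Finset.card_union_le _ _)
    omega
private lemma g6_no_matching {s : ℕ} (hp : 3 ≤ p) (hps : 2*p + c*(2*p-2) ≤ 2*s + 1) :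
    NoMatchingOfSize (G6 p c n) (s + 1) := by
  classical
  intro M hM
  set m' : ℕ := n - p - 1 - c * (2 * p - 2) with hm'
  set ISf : Finset V' := Finset.univ.image
    (fun x : Fin m' => Sum.inr (Sum.inl (Sum.inr (Sum.inr x)))) with hISf
  set IS : Set V' := ↑ISf with hIS
  set Hf : Finset V' := {Sum.inl 0} ∪
    Finset.univ.image (fun a : Fin (p-2) => Sum.inr (Sum.inl (Sum.inl a))) with hHf
  -- the partner function
  set g : V' → V' := fun v => if h : v ∈ M.verts then (hM h).choose else v with hg
  have hgadj : ∀ v ∈ M.verts, M.Adj v (g v) := by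
    intro v hv
    rw [hg]
    simp only [dif_pos hv]
    exact (hM hv).choose_spec.1
  have hmaps : Set.MapsTo g (M.verts ∩ IS) ↑Hf := by
    rintro v ⟨hv, hvI⟩
    rw [hIS, hISf] at hvI
    simp only [Finset.coe_image, Finset.coe_univ, Set.image_univ, Set.mem_range] at hvI
    obtain ⟨x, rfl⟩ := hvI
    have hadj : (G6 p c n).Adj _ (g _) := M.adj_sub (hgadj _ hv)
    rcases adjI hadj with h | ⟨a, h⟩
    · rw [h]; simp [hHf]
    · rw [h]; simp [hHf]
  have hinj : Set.InjOn g (M.verts ∩ IS) := by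
    rintro v₁ ⟨hv₁, _⟩ v₂ ⟨hv₂, _⟩ heq
    have h1 : M.Adj (g v₁) v₁ := (hgadj v₁ hv₁).symm
    have h2 : M.Adj (g v₁) v₂ := heq ▸ (hgadj v₂ hv₂).symm
    have hw : g v₁ ∈ M.verts := h1.fst_mem
    obtain ⟨w, _, huniq⟩ := hM hw
    rw [huniq v₁ h1, huniq v₂ h2]
  have hineq1 : (M.verts ∩ IS).ncard ≤ Hf.card := by
    have := Set.ncard_le_ncard_of_injOn g hmaps hinj (Hf.finite_toSet)
    rwa [Set.ncard_coe_finset] at this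
  have hHcard : Hf.card ≤ p - 1 := by
    refine (Finset.card_union_le _ _).trans ?_
    have h1 := Finset.card_image_le (s := (Finset.univ : Finset (Fin (p-2))))
      (f := fun a : Fin (p-2) => (Sum.inr (Sum.inl (Sum.inl a)) : V'))
    simp only [Finset.card_univ, Fintype.card_fin] at h1
    have : Finset.card {(Sum.inl 0 : V')} = 1 := Finset.card_singleton _
    omega
  have hineq2 : (M.verts \ IS).ncard ≤ p + 1 + c * (2*p-2) := by
    have hsub : M.verts \ IS ⊆ ↑(ISfᶜ) := by
      intro v hv
      simp only [Finset.coe_compl, Set.mem_compl_iff, Finset.mem_coe]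
      exact fun h => hv.2 (by rw [hIS]; exact h)
    have := Set.ncard_le_ncard hsub (ISfᶜ).finite_toSet
    rw [Set.ncard_coe_finset] at this
    have hcompl : (ISfᶜ).card = Fintype.card V' - ISf.card := Finset.card_compl _
    have hIScard : ISf.card = m' := by
      rw [hISf, Finset.card_image_of_injective _ (fun a b hab => by
        simpa using hab)]
      simp
    have htot : Fintype.card V' = 1 + ((p-2) + (2 + m')) + c * (2*p-2) := by
      simp [Fintype.card_sum, Fintype.card_prod]
      ring
    omega
  have hcover : M.verts.ncard ≤ (M.verts ∩ IS).ncard + (M.verts \ IS).ncard := by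
    rw [← Set.ncard_inter_add_ncard_diff_eq_ncard M.verts IS (Set.toFinite _)]
  omega
end

theorem stmt_19 (p s c d : ℕ) (hp : 3 ≤ p) (hs : p ≤ s)
    (hc : c = (s - p + 1) / (p - 1)) (hd : d = s - p + 1 - c * (p - 1))
    (hd1 : 1 ≤ d) (hd2 : d ≤ p - 2) :
    ∃ N : ℕ, ∀ n : ℕ, N ≤ n →
      NoLongCycle (G6 p c n) (2 * p) ∧ NoMatchingOfSize (G6 p c n) (s + 1) := by
  have harith : 2*p + c*(2*p-2) ≤ 2*s + 1 := by
    have e1 : 2*p-2 = 2*(p-1) := by omega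
    have e2 : c*(2*p-2) = 2*(c*(p-1)) := by rw [e1]; ring
    have := hd1
    rw [hd] at this
    omega
  exact ⟨0, fun n _ => ⟨g6_no_long_cycle hp, g6_no_matching hp harith⟩⟩
end
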